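/- Let p be a prime and let f ∈ Z_p[x_1,…,x_k] be a symmetric polynomial with δ_2(f) = 0. Let λ be a multiset of positive integers of cardinality k such that the coefficient in f of the monomials with exponent multiset λ is nonzero (i.e., τλ participates in f). Then for every μ ∈ ann_p(λ), the coefficient in f of the monomials with exponent multiset μ is also nonzero. -/

import Mathlib

open MvPolynomial

/-- The `m`-coboundary map `δ_m` on polynomials in `k` variables `x_1, …, x_k`
(indexed by `Fin k`, with `j : Fin k` standing for the variable `x_{j+1}`),
landing in polynomials in the variables `x_0, …, x_k` (indexed by `Fin (k+1)`). -/
noncomputable def delta (A : Type*) [CommRing A] (m k : ℕ)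
    (f : MvPolynomial (Fin k) A) : MvPolynomial (Fin (k + 1)) A :=
  aeval (fun j : Fin k => (X j.succ : MvPolynomial (Fin (k + 1)) A)) f
    + ∑ i ∈ Finset.Icc 1 m, (-1 : MvPolynomial (Fin (k + 1)) A) ^ i *
        aeval (fun j : Fin k =>
          if (j : ℕ) + 1 < i then (X j.castSucc : MvPolynomial (Fin (k + 1)) A)
          else if (j : ℕ) + 1 = i then X j.castSucc + X j.succ
          else X j.succ) f
    + (-1 : MvPolynomial (Fin (k + 1)) A) ^ (m + 1) *
        aeval (fun j : Fin k =>
          if (j : ℕ) + 1 ≤ m then (X j.castSucc : MvPolynomial (Fin (k + 1)) A)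
          else X j.succ) f

/-- The monomial symmetric polynomial `τ λ` associated to a multi-index
`λ : Fin k → ℕ`: the sum of `x^μ` over the distinct rearrangements `μ` of `λ`. -/
noncomputable def tau (A : Type*) [CommRing A] {k : ℕ} (lam : Fin k → ℕ) :
    MvPolynomial (Fin k) A :=
  ∑ d ∈ (Finset.univ : Finset (Equiv.Perm (Fin k))).image
      (fun σ => Finsupp.equivFunOnFinite.symm (fun i => lam (σ i))),
    monomial d (1 : A)

/-- The multiset of values of a multi-index `Fin k → ℕ`. -/
def multisetOf {k : ℕ} (lam : Fin k → ℕ) : Multiset ℕ :=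
  Multiset.map lam Finset.univ.val

/-- The exponent multiset of an exponent vector `d : Fin k →₀ ℕ`. -/
def exMult {k : ℕ} (d : Fin k →₀ ℕ) : Multiset ℕ :=
  multisetOf (⇑d)

/-- `σ_p(n)`, the sum of the digits of `n` in base `p`. -/
def sigmaDigits (p n : ℕ) : ℕ := (Nat.digits p n).sum

/-- `α_p(λ)`, the number of carries when summing the entries of `λ` in base `p`;
equivalently the `p`-adic valuation of the multinomial coefficient of `λ`. -/
def alphaCarry (p : ℕ) (s : Multiset ℕ) : ℕ :=
  padicValNat p (Nat.factorial s.sum / (s.map Nat.factorial).prod)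

/-- The splitting distance `φ_p(λ) = (Σ_i σ_p(λ_i)) − |λ|`. -/
def phiSplit (p : ℕ) (s : Multiset ℕ) : ℕ :=
  (s.map (sigmaDigits p)).sum - Multiset.card s

/-- A multiset is power-of-`p` when all its entries are powers of `p`. -/
def IsPowOf (p : ℕ) (s : Multiset ℕ) : Prop := ∀ x ∈ s, ∃ a : ℕ, x = p ^ a

/-- `λ` is `p`-carry-minimal: `α_p(λ) ≤ α_p(μ)` for every multiset `μ` of positive
integers with the same sum and the same number of entries as `λ`. -/
def IsCarryMin (p : ℕ) (s : Multiset ℕ) : Prop :=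
  ∀ t : Multiset ℕ, (∀ x ∈ t, 0 < x) → t.sum = s.sum →
    Multiset.card t = Multiset.card s → alphaCarry p s ≤ alphaCarry p t

/-- A single gathering operation: replace two entries `a`, `b` by `a + b`. -/
def Gathers (s t : Multiset ℕ) : Prop :=
  ∃ a b u, s = a ::ₘ b ::ₘ u ∧ t = (a + b) ::ₘ u

/-- `gatherSet m λ = T^m(λ)`, the set of multisets obtained from `λ` by `m`
successive gathering operations. -/
def gatherSet : ℕ → Multiset ℕ → Set (Multiset ℕ)
  | 0, s => {s}
  | m + 1, s => {t | ∃ u ∈ gatherSet m s, Gathers u t}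

/-- One step of the annihilating-set construction: split an entry `x = a + b`
(with `a, b > 0` and no base-`p` carries in `a + b`), and add `b` onto another
entry `y`. -/
def AnnStep (p : ℕ) (μ ν : Multiset ℕ) : Prop :=
  ∃ (x y a b : ℕ) (u : Multiset ℕ), μ = x ::ₘ y ::ₘ u ∧ 0 < a ∧ 0 < b ∧ a + b = x ∧
    sigmaDigits p a + sigmaDigits p b = sigmaDigits p x ∧ ν = a ::ₘ (b + y) ::ₘ u

/-- `ann_p(λ)`: the smallest set of multisets containing `λ` closed under `AnnStep`. -/
def annSet (p : ℕ) (lam : Multiset ℕ) : Set (Multiset ℕ) :=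
  {μ | Relation.ReflTransGen (AnnStep p) lam μ}

/-- The `m`-coboundary map as a linear map. -/
noncomputable def deltaLM (A : Type*) [CommRing A] (m k : ℕ) :
    MvPolynomial (Fin k) A →ₗ[A] MvPolynomial (Fin (k + 1)) A :=
  (aeval (fun j : Fin k => (X j.succ : MvPolynomial (Fin (k + 1)) A))).toLinearMap
    + ∑ i ∈ Finset.Icc 1 m, ((-1 : A) ^ i) •
        (aeval (fun j : Fin k =>
          if (j : ℕ) + 1 < i then (X j.castSucc : MvPolynomial (Fin (k + 1)) A)
          else if (j : ℕ) + 1 = i then X j.castSucc + X j.succ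
          else X j.succ)).toLinearMap
    + ((-1 : A) ^ (m + 1)) •
        (aeval (fun j : Fin k =>
          if (j : ℕ) + 1 ≤ m then (X j.castSucc : MvPolynomial (Fin (k + 1)) A)
          else X j.succ)).toLinearMap


section Aux
open Finsupp
variable {A : Type*} [CommRing A] {k' : ℕ}

lemma multisetOf_eq_ofFn {k : ℕ} (v : Fin k → ℕ) : multisetOf v = (List.ofFn v : Multiset ℕ) := by
  simp [multisetOf]

lemma multisetOf_cons {k : ℕ} (a : ℕ) (v : Fin k → ℕ) :
    multisetOf (Fin.cons a v) = a ::ₘ multisetOf v := by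
  simp [multisetOf_eq_ofFn, List.ofFn_succ]

lemma exists_rep {n : ℕ} (s : Multiset ℕ) (h : Multiset.card s = n) :
    ∃ v : Fin n → ℕ, multisetOf v = s := by
  obtain ⟨l, rfl⟩ : ∃ l : List ℕ, (l : Multiset ℕ) = s := ⟨s.toList, s.coe_toList⟩
  have hl : l.length = n := by simpa using h
  subst hl
  exact ⟨l.get, by simp [multisetOf_eq_ofFn]⟩

lemma exists_perm_comp {n : ℕ} (d d' : Fin n → ℕ) (h : multisetOf d = multisetOf d') :
    ∃ σ : Equiv.Perm (Fin n), d' = d ∘ σ := by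
  rw [multisetOf_eq_ofFn, multisetOf_eq_ofFn, Multiset.coe_eq_coe] at h
  have h1 : (List.ofFn (d ∘ Tuple.sort d)).Perm (List.ofFn (d' ∘ Tuple.sort d')) := by
    refine ((Tuple.sort d).ofFn_comp_perm d).trans (h.trans ?_)
    exact ((Tuple.sort d').ofFn_comp_perm d').symm
  have h2 : d ∘ Tuple.sort d = d' ∘ Tuple.sort d' :=
    List.ofFn_injective <| List.Perm.eq_of_sortedLE
      (Tuple.monotone_sort d).sortedLE_ofFn (Tuple.monotone_sort d').sortedLE_ofFn h1
  refine ⟨(Tuple.sort d').symm.trans (Tuple.sort d), ?_⟩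
  funext i
  have := congrFun h2 ((Tuple.sort d').symm i)
  simpa using this.symm

lemma coeff_eq_of_exMult_eq {p k : ℕ} (f : MvPolynomial (Fin k) (ZMod p))
    (hsym : f.IsSymmetric) (d d' : Fin k →₀ ℕ) (h : exMult d = exMult d') :
    coeff d f = coeff d' f := by
  obtain ⟨σ, hσ⟩ := exists_perm_comp (⇑d) (⇑d') h
  have hd' : d' = Finsupp.mapDomain σ.symm d := by
    ext j
    rw [Finsupp.mapDomain_equiv_apply]
    simp [hσ]
  rw [hd', ← hsym σ.symm, coeff_rename_mapDomain _ (Equiv.injective _), hsym]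



lemma apply3 {n : ℕ} (s t j : Fin n) (m : Fin n →₀ ℕ) (i r : ℕ) :
    (Finsupp.erase t m + (Finsupp.single s i + Finsupp.single t r)) j =
      (if j = t then 0 else m j) + ((if s = j then i else 0) + (if t = j then r else 0)) := by
  simp [Finsupp.single_apply, Finsupp.erase_apply]

lemma apply2 {n : ℕ} (s t j : Fin n) (E : Fin n →₀ ℕ) (v : ℕ) :
    (Finsupp.erase s E + Finsupp.single t v) j =
      (if j = s then 0 else E j) + (if t = j then v else 0) := by
  simp [Finsupp.single_apply, Finsupp.erase_apply]

lemma cond_iff {n : ℕ} (s t : Fin n) (hst : s ≠ t) (m E : Fin n →₀ ℕ) (hms : m s = 0)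
    (i : ℕ) (hi : i ≤ m t) :
    Finsupp.erase t m + (Finsupp.single s i + Finsupp.single t (m t - i)) = E ↔
      i = E s ∧ m = Finsupp.erase s E + Finsupp.single t (E s) := by
  constructor
  · intro h
    have hs := DFunLike.congr_fun h s
    have ht := DFunLike.congr_fun h t
    rw [apply3] at hs ht
    simp only [hms, if_neg hst, if_neg (Ne.symm hst), if_pos rfl, ite_self, if_true] at hs ht
    have his : i = E s := by omega
    refine ⟨his, ?_⟩
    ext j
    rw [apply2]
    rcases eq_or_ne j s with rfl | hjs
    · rw [if_pos rfl, if_neg (fun hh => hst hh.symm), hms]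
    · rcases eq_or_ne j t with rfl | hjt
      · rw [if_neg hjs, if_pos rfl]; omega
      · have hj := DFunLike.congr_fun h j
        rw [apply3] at hj
        rw [if_neg hjt, if_neg (fun hh => hjs hh.symm), if_neg (fun hh => hjt hh.symm)] at hj
        rw [if_neg hjs, if_neg (fun hh => hjt hh.symm)]; omega
  · rintro ⟨his, hm⟩
    have hmt : m t = E t + E s := by
      rw [hm, apply2, if_neg (Ne.symm hst), if_pos rfl]
    ext j
    rw [apply3]
    rcases eq_or_ne j s with rfl | hjs
    · rw [if_neg hst, hms, if_pos rfl, if_neg (Ne.symm hst)]; omega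
    · rcases eq_or_ne j t with rfl | hjt
      · rw [if_pos rfl, if_neg (fun hh => hst hh), if_pos rfl]; omega
      · have := DFunLike.congr_fun hm j
        rw [apply2, if_neg hjs, if_neg (fun hh => hjt hh.symm)] at this
        rw [if_neg hjt, if_neg (fun hh => hjs hh.symm), if_neg (fun hh => hjt hh.symm)]
        omega

lemma monomial_eq_prod {n : ℕ} (d : Fin n →₀ ℕ) (c : A) :
    (monomial d c : MvPolynomial (Fin n) A) = C c * ∏ i : Fin n, X i ^ d i := by
  rw [monomial_eq, Finsupp.prod_fintype _ _ (fun i => pow_zero _)]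

lemma coeff_subst_add_monomial {n : ℕ} (s t : Fin n) (hst : s ≠ t)
    (m : Fin n →₀ ℕ) (hms : m s = 0) (c : A) (E : Fin n →₀ ℕ) :
    coeff E (aeval (fun i => if i = t then (X s + X t : MvPolynomial (Fin n) A) else X i)
        (monomial m c)) =
      (Nat.choose (E s + E t) (E s) : A) *
        coeff (Finsupp.erase s E + Finsupp.single t (E s)) (monomial m c) := by
  set φ : Fin n → MvPolynomial (Fin n) A :=
    fun i => if i = t then (X s + X t : MvPolynomial (Fin n) A) else X i with hφ
  have hmon : (monomial (Finsupp.erase t m) c : MvPolynomial (Fin n) A) =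
      C c * ∏ i ∈ {t}ᶜ, (X i : MvPolynomial (Fin n) A) ^ m i := by
    rw [monomial_eq_prod, Fintype.prod_eq_mul_prod_compl t, Finsupp.erase_same, pow_zero,
      one_mul]
    congr 1
    refine Finset.prod_congr rfl fun i hi => ?_
    simp only [Finset.mem_compl, Finset.mem_singleton] at hi
    rw [Finsupp.erase_ne hi]
  have h1 : aeval φ (monomial m c) =
      monomial (Finsupp.erase t m) c * (X s + X t) ^ (m t) := by
    rw [aeval_monomial, Finsupp.prod_fintype _ _ (fun i => pow_zero _),
      Fintype.prod_eq_mul_prod_compl t, hmon]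
    have : ∏ i ∈ {t}ᶜ, φ i ^ m i = ∏ i ∈ {t}ᶜ, (X i : MvPolynomial (Fin n) A) ^ m i := by
      refine Finset.prod_congr rfl fun i hi => ?_
      simp only [Finset.mem_compl, Finset.mem_singleton] at hi
      simp [hφ, hi]
    rw [this, algebraMap_eq]
    have hφt : φ t = X s + X t := by simp [hφ]
    rw [hφt]; ring
  have h2 : ((X s + X t : MvPolynomial (Fin n) A)) ^ (m t) =
      ∑ i ∈ Finset.range (m t + 1),
        monomial (Finsupp.single s i + Finsupp.single t (m t - i))
          ((Nat.choose (m t) i : A)) := by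
    rw [add_pow]
    refine Finset.sum_congr rfl fun i hi => ?_
    rw [X_pow_eq_monomial, X_pow_eq_monomial, monomial_mul, mul_one]
    rw [show ((Nat.choose (m t) i : ℕ) : MvPolynomial (Fin n) A) = C ((Nat.choose (m t) i : A))
      by simp]
    rw [mul_comm, C_mul_monomial, mul_one]
  rw [h1, h2, Finset.mul_sum]
  simp only [monomial_mul]
  rw [coeff_sum]
  simp only [coeff_monomial]
  by_cases hm : m = Finsupp.erase s E + Finsupp.single t (E s)
  · have hmt : m t = E t + E s := by
      rw [hm, apply2, if_neg (Ne.symm hst), if_pos rfl]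
    rw [Finset.sum_eq_single (E s)]
    · rw [if_pos ((cond_iff s t hst m E hms (E s) (by omega)).mpr ⟨rfl, hm⟩), if_pos hm, hmt]
      rw [Nat.add_comm (E t) (E s)]
      ring
    · intro b hb hbne
      rw [if_neg]
      intro hcond
      exact hbne ((cond_iff s t hst m E hms b (by simp at hb; omega)).mp hcond).1
    · intro hmem
      exact absurd (Finset.mem_range.mpr (by omega)) hmem
  · rw [if_neg hm, mul_zero]
    refine Finset.sum_eq_zero fun i hi => ?_
    rw [if_neg]
    intro hcond
    exact hm ((cond_iff s t hst m E hms i (by simp at hi; omega)).mp hcond).2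

lemma coeff_subst_add {n : ℕ} (s t : Fin n) (hst : s ≠ t)
    (g : MvPolynomial (Fin n) A) (hg : ∀ m ∈ g.support, m s = 0) (E : Fin n →₀ ℕ) :
    coeff E (aeval (fun i => if i = t then (X s + X t : MvPolynomial (Fin n) A) else X i) g) =
      (Nat.choose (E s + E t) (E s) : A) *
        coeff (Finsupp.erase s E + Finsupp.single t (E s)) g := by
  calc coeff E (aeval (fun i => if i = t then (X s + X t : MvPolynomial (Fin n) A) else X i) g)
      = ∑ m ∈ g.support, coeff E
          (aeval (fun i => if i = t then (X s + X t : MvPolynomial (Fin n) A) else X i)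
            (monomial m (coeff m g))) := by
        conv_lhs => rw [← support_sum_monomial_coeff g]
        rw [map_sum, coeff_sum]
    _ = ∑ m ∈ g.support, (Nat.choose (E s + E t) (E s) : A) *
          coeff (Finsupp.erase s E + Finsupp.single t (E s)) (monomial m (coeff m g)) :=
        Finset.sum_congr rfl fun m hm =>
          coeff_subst_add_monomial s t hst m (hg m hm) (coeff m g) E
    _ = (Nat.choose (E s + E t) (E s) : A) *
          coeff (Finsupp.erase s E + Finsupp.single t (E s)) g := by
        rw [← Finset.mul_sum]
        congr 1
        conv_rhs => rw [← support_sum_monomial_coeff g]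
        rw [coeff_sum]

lemma rename_support_zero {n m : ℕ} (r : Fin n → Fin m) (f : MvPolynomial (Fin n) A)
    (j : Fin m) (hj : j ∉ Set.range r) :
    ∀ d ∈ (rename r f).support, d j = 0 := by
  intro d hd
  obtain ⟨u, hu, -⟩ := coeff_rename_ne_zero r f d (MvPolynomial.mem_support_iff.mp hd)
  rw [← hu]
  exact Finsupp.mapDomain_notin_range u j hj

lemma coeff_rename_zero {n m : ℕ} (r : Fin n → Fin m) (f : MvPolynomial (Fin n) A)
    (E : Fin m →₀ ℕ) (j : Fin m) (hj : j ∉ Set.range r) (hEj : E j ≠ 0) :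
    coeff E (rename r f) = 0 := by
  by_contra h
  obtain ⟨u, hu, -⟩ := coeff_rename_ne_zero r f E h
  exact hEj (by rw [← hu]; exact Finsupp.mapDomain_notin_range u j hj)



lemma eq0 (f : MvPolynomial (Fin (k' + 2)) A) :
    aeval (fun j : Fin (k' + 2) => (X j.succ : MvPolynomial (Fin (k' + 2 + 1)) A)) f
      = rename Fin.succ f := by
  rw [rename_eq_aeval]; rfl

lemma eq1 (f : MvPolynomial (Fin (k' + 2)) A) :
    aeval (fun j : Fin (k' + 2) =>
      if (j : ℕ) + 1 < 1 then (X j.castSucc : MvPolynomial (Fin (k' + 2 + 1)) A)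
      else if (j : ℕ) + 1 = 1 then X j.castSucc + X j.succ
      else X j.succ) f
    = aeval (fun i : Fin (k' + 2 + 1) =>
        if i = 1 then (X 0 + X 1 : MvPolynomial (Fin (k' + 2 + 1)) A) else X i)
      (rename Fin.succ f) := by
  have h : ((aeval (fun i : Fin (k' + 2 + 1) =>
        if i = 1 then (X 0 + X 1 : MvPolynomial (Fin (k' + 2 + 1)) A) else X i) :
        MvPolynomial (Fin (k' + 2 + 1)) A →ₐ[A] MvPolynomial (Fin (k' + 2 + 1)) A).comp
        (rename (Fin.succ : Fin (k' + 2) → Fin (k' + 2 + 1)))) =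
      aeval (fun j : Fin (k' + 2) =>
        if (j : ℕ) + 1 < 1 then (X j.castSucc : MvPolynomial (Fin (k' + 2 + 1)) A)
        else if (j : ℕ) + 1 = 1 then X j.castSucc + X j.succ
        else X j.succ) := by
    apply algHom_ext
    intro i
    simp only [AlgHom.comp_apply, rename_X, aeval_X]
    by_cases hi : i = 0
    · subst hi
      rw [if_pos (show (0 : Fin (k' + 2)).succ = 1 by rfl), if_neg (by omega),
        if_pos (by simp)]
      simp
    · rw [if_neg (fun hh : i.succ = 1 => hi (by
        have := congrArg Fin.val hh
        rw [Fin.val_succ, Fin.val_one] at this; apply Fin.ext; rw [Fin.val_zero]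
        omega)), if_neg (by omega), if_neg (by
        rw [Fin.ext_iff, Fin.val_zero] at hi
        omega)]
  rw [← h, AlgHom.comp_apply]

lemma eq2 (f : MvPolynomial (Fin (k' + 2)) A) :
    aeval (fun j : Fin (k' + 2) =>
      if (j : ℕ) + 1 < 2 then (X j.castSucc : MvPolynomial (Fin (k' + 2 + 1)) A)
      else if (j : ℕ) + 1 = 2 then X j.castSucc + X j.succ
      else X j.succ) f
    = aeval (fun i : Fin (k' + 2 + 1) =>
        if i = 2 then (X 1 + X 2 : MvPolynomial (Fin (k' + 2 + 1)) A) else X i)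
      (rename (Fin.cases 0 (fun t : Fin (k' + 1) => t.succ.succ) : Fin (k' + 2) → Fin (k' + 2 + 1)) f) := by
  have h : ((aeval (fun i : Fin (k' + 2 + 1) =>
        if i = 2 then (X 1 + X 2 : MvPolynomial (Fin (k' + 2 + 1)) A) else X i) :
        MvPolynomial (Fin (k' + 2 + 1)) A →ₐ[A] MvPolynomial (Fin (k' + 2 + 1)) A).comp
        (rename (Fin.cases 0 (fun t : Fin (k' + 1) => t.succ.succ) : Fin (k' + 2) → Fin (k' + 2 + 1)))) =
      aeval (fun j : Fin (k' + 2) =>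
        if (j : ℕ) + 1 < 2 then (X j.castSucc : MvPolynomial (Fin (k' + 2 + 1)) A)
        else if (j : ℕ) + 1 = 2 then X j.castSucc + X j.succ
        else X j.succ) := by
    apply algHom_ext
    intro i
    simp only [AlgHom.comp_apply, rename_X, aeval_X]
    induction i using Fin.cases with
    | zero =>
      rw [Fin.cases_zero, if_neg (by rw [Fin.ext_iff, Fin.val_zero, Fin.val_two]; omega), if_pos (by norm_num)]
      simp
    | succ t =>
      rw [Fin.cases_succ]
      by_cases ht : t = 0
      · subst ht
        rw [if_pos (by simp [Fin.ext_iff]), if_neg (by simp), if_pos (by simp)]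
        have h1 : (Fin.castSucc ((0 : Fin (k' + 1)).succ)) = (1 : Fin (k' + 2 + 1)) := by
          simp [Fin.ext_iff]
        have h2 : ((0 : Fin (k' + 1)).succ).succ = (2 : Fin (k' + 2 + 1)) := by
          simp [Fin.ext_iff]
        rw [h1, h2]
      · have htv : (t : ℕ) ≠ 0 := fun hh => ht (Fin.ext (by simpa using hh))
        rw [if_neg (fun hh : t.succ.succ = 2 => htv (by
            have := congrArg Fin.val hh
            rw [Fin.val_succ, Fin.val_succ, Fin.val_two] at this
            omega)),
          if_neg (by simp only [Fin.val_succ]; omega),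
          if_neg (by simp only [Fin.val_succ]; omega)]
  rw [← h, AlgHom.comp_apply]

lemma eq3 (f : MvPolynomial (Fin (k' + 2)) A) :
    aeval (fun j : Fin (k' + 2) =>
      if (j : ℕ) + 1 ≤ 2 then (X j.castSucc : MvPolynomial (Fin (k' + 2 + 1)) A)
      else X j.succ) f
    = rename (fun j : Fin (k' + 2) =>
        if (j : ℕ) < 2 then j.castSucc else j.succ) f := by
  have hfun : (fun j : Fin (k' + 2) =>
      if (j : ℕ) + 1 ≤ 2 then (X j.castSucc : MvPolynomial (Fin (k' + 2 + 1)) A)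
      else X j.succ) =
      (X ∘ fun j : Fin (k' + 2) => if (j : ℕ) < 2 then j.castSucc else j.succ) := by
    funext j
    simp only [Function.comp_apply]
    rw [apply_ite (X : Fin (k' + 2 + 1) → MvPolynomial (Fin (k' + 2 + 1)) A)]
    exact if_congr (by omega) rfl rfl
  rw [hfun, rename_eq_aeval]

lemma choose_ne_zero_zmod {p : ℕ} (hp : p.Prime) (a b : ℕ)
    (hdig : sigmaDigits p a + sigmaDigits p b = sigmaDigits p (a + b)) :
    (((a + b).choose a : ℕ) : ZMod p) ≠ 0 := by
  haveI := Fact.mk hp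
  rw [Ne, ZMod.natCast_eq_zero_iff]
  intro hdvd
  have hpos : 0 < (a + b).choose a := Nat.choose_pos (Nat.le_add_right a b)
  have hval : 1 ≤ padicValNat p ((a + b).choose a) :=
    one_le_padicValNat_of_dvd hpos.ne' hdvd
  have hk := sub_one_mul_padicValNat_choose_eq_sub_sum_digits' (p := p) (k := a) (n := b)
  rw [show b + a = a + b from Nat.add_comm b a] at hk
  unfold sigmaDigits at hdig
  have h0 : (p - 1) * padicValNat p ((a + b).choose a) = 0 := by omega
  have hp1 : 1 ≤ p - 1 := by have := hp.two_le; omega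
  rcases Nat.mul_eq_zero.mp h0 with h | h <;> omega

end Aux

section Step
open Finsupp
variable {p : ℕ} {k' : ℕ}

lemma step_main (hp : p.Prime) (f : MvPolynomial (Fin (k' + 2)) (ZMod p))
    (hsym : f.IsSymmetric) (hcoc : delta (ZMod p) 2 (k' + 2) f = 0)
    (x y a b : ℕ) (u : Multiset ℕ) (hcardu : Multiset.card u = k')
    (hy : 0 < y) (ha : 0 < a) (hb : 0 < b) (hab : a + b = x)
    (hdig : sigmaDigits p a + sigmaDigits p b = sigmaDigits p x)
    (hprev : ∃ e : Fin (k' + 2) →₀ ℕ, exMult e = x ::ₘ y ::ₘ u ∧ coeff e f ≠ 0) :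
    ∃ d : Fin (k' + 2) →₀ ℕ, exMult d = a ::ₘ (b + y) ::ₘ u ∧ coeff d f ≠ 0 := by
  haveI := Fact.mk hp
  obtain ⟨g, hg⟩ := exists_rep u hcardu
  set e : Fin (k' + 2) →₀ ℕ :=
    Finsupp.equivFunOnFinite.symm (Fin.cons x (Fin.cons y g)) with he
  set d : Fin (k' + 2) →₀ ℕ :=
    Finsupp.equivFunOnFinite.symm (Fin.cons a (Fin.cons (b + y) g)) with hd
  set E : Fin (k' + 2 + 1) →₀ ℕ :=
    Finsupp.equivFunOnFinite.symm (Fin.cons a (Fin.cons b (Fin.cons y g))) with hEdef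
  have hEc : ⇑E = Fin.cons a (Fin.cons b (Fin.cons y g)) := rfl
  have hec : ⇑e = Fin.cons x (Fin.cons y g) := rfl
  have hdc : ⇑d = Fin.cons a (Fin.cons (b + y) g) := rfl
  -- numeral facts
  have h1s : (1 : Fin (k' + 2 + 1)) = (0 : Fin (k' + 2)).succ := by
    simp [Fin.ext_iff]
  have h2s : (2 : Fin (k' + 2 + 1)) = ((0 : Fin (k' + 1)).succ).succ := by
    simp [Fin.ext_iff]
  have h1s' : (1 : Fin (k' + 2)) = (0 : Fin (k' + 1)).succ := by
    simp [Fin.ext_iff]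
  -- coordinates of E
  have hE0 : E 0 = a := by rw [hEdef]; simp
  have hE1 : E 1 = b := by
    rw [hEdef, h1s]
    simp only [Finsupp.coe_equivFunOnFinite_symm, Fin.cons_succ, Fin.cons_zero]
  have hE2 : E 2 = y := by
    rw [hEdef, h2s]
    simp only [Finsupp.coe_equivFunOnFinite_symm, Fin.cons_succ, Fin.cons_zero]
  -- renaming maps
  set r₂ : Fin (k' + 2) → Fin (k' + 2 + 1) :=
    Fin.cases 0 (fun t : Fin (k' + 1) => t.succ.succ) with hr₂
  set r₃ : Fin (k' + 2) → Fin (k' + 2 + 1) :=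
    fun j => if (j : ℕ) < 2 then j.castSucc else j.succ with hr₃
  have hr₂val : ∀ i : Fin (k' + 2), ((r₂ i : Fin (k' + 2 + 1)) : ℕ)
      = if (i : ℕ) = 0 then 0 else (i : ℕ) + 1 := by
    intro i
    induction i using Fin.cases with
    | zero => simp [hr₂]
    | succ t => simp [hr₂]
  have hr₂inj : Function.Injective r₂ := by
    intro i₁ i₂ h
    have := congrArg Fin.val h
    rw [hr₂val, hr₂val] at this
    have hlt₁ : (i₁ : ℕ) < k' + 2 := i₁.isLt
    have hlt₂ : (i₂ : ℕ) < k' + 2 := i₂.isLt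
    apply Fin.ext
    split_ifs at this <;> omega
  have hrange0 : (0 : Fin (k' + 2 + 1)) ∉ Set.range (Fin.succ : Fin (k' + 2) → Fin (k' + 2 + 1)) := by
    rintro ⟨i, hi⟩; exact Fin.succ_ne_zero i hi
  have hrange1 : (1 : Fin (k' + 2 + 1)) ∉ Set.range r₂ := by
    rintro ⟨i, hi⟩
    have := congrArg Fin.val hi
    rw [hr₂val] at this
    rw [Fin.val_one] at this
    split_ifs at this <;> omega
  have hrange2 : (2 : Fin (k' + 2 + 1)) ∉ Set.range r₃ := by
    rintro ⟨i, hi⟩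
    have := congrArg Fin.val hi
    have h2v : ((2 : Fin (k' + 2 + 1)) : ℕ) = 2 := by simp
    rw [hr₃] at this
    simp only at this
    split_ifs at this with hc
    · rw [h2v] at this; simp only [Fin.coe_castSucc] at this; omega
    · rw [h2v] at this; simp only [Fin.val_succ] at this
      have := i.isLt; omega
  -- mapDomain identifications
  have hmap1 : Finsupp.mapDomain Fin.succ e = Finsupp.erase 0 E + Finsupp.single 1 a := by
    ext j
    induction j using Fin.cases with
    | zero =>
      rw [Finsupp.mapDomain_notin_range _ _ hrange0, Finsupp.add_apply, Finsupp.erase_same,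
        Finsupp.single_apply, if_neg (show (1 : Fin (k' + 2 + 1)) ≠ 0 by simp [Fin.ext_iff])]
      simp
    | succ i =>
      rw [Finsupp.mapDomain_apply (Fin.succ_injective _), Finsupp.add_apply,
        Finsupp.erase_ne (Fin.succ_ne_zero i), Finsupp.single_apply]
      induction i using Fin.cases with
      | zero =>
        rw [if_pos h1s]
        show (Fin.cons x (Fin.cons y g) : Fin (k' + 2) → ℕ) 0 =
          (Fin.cons a (Fin.cons b (Fin.cons y g)) : Fin (k' + 2 + 1) → ℕ) (Fin.succ 0) + a
        rw [Fin.cons_zero, Fin.cons_succ, Fin.cons_zero]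
        omega
      | succ t =>
        rw [if_neg (show (1 : Fin (k' + 2 + 1)) ≠ t.succ.succ by
          rw [h1s]; intro hh; exact Fin.succ_ne_zero t (Fin.succ_injective _ hh).symm)]
        show (Fin.cons x (Fin.cons y g) : Fin (k' + 2) → ℕ) t.succ =
          (Fin.cons a (Fin.cons b (Fin.cons y g)) : Fin (k' + 2 + 1) → ℕ) t.succ.succ + 0
        simp [Fin.cons_succ]
  have hr₂zero : r₂ 0 = 0 := by simp [hr₂]
  have hr₂succ : ∀ t : Fin (k' + 1), r₂ t.succ = t.succ.succ := fun t => by simp [hr₂]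
  have hmap2 : Finsupp.mapDomain r₂ d = Finsupp.erase 1 E + Finsupp.single 2 b := by
    have L0 : Finsupp.mapDomain r₂ d 0 = d 0 := by
      have h := Finsupp.mapDomain_apply hr₂inj d (0 : Fin (k' + 2))
      rwa [hr₂zero] at h
    have Ls : ∀ t : Fin (k' + 1), Finsupp.mapDomain r₂ d t.succ.succ = d t.succ := by
      intro t
      have h := Finsupp.mapDomain_apply hr₂inj d t.succ
      rwa [hr₂succ t] at h
    have L1 : Finsupp.mapDomain r₂ d 1 = 0 := Finsupp.mapDomain_notin_range _ _ hrange1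
    have h01 : (0 : Fin (k' + 2 + 1)) ≠ 1 := by
      rw [h1s]; exact (Fin.succ_ne_zero 0).symm
    have h20 : (2 : Fin (k' + 2 + 1)) ≠ 0 := by
      rw [h2s]; exact Fin.succ_ne_zero _
    have h21 : (2 : Fin (k' + 2 + 1)) ≠ 1 := by
      rw [h2s, h1s]; intro hh; exact Fin.succ_ne_zero 0 (Fin.succ_injective _ hh)
    ext j
    induction j using Fin.cases with
    | zero =>
      rw [L0, Finsupp.add_apply, Finsupp.erase_ne h01, Finsupp.single_apply, if_neg h20,
        hE0, add_zero]
      show (Fin.cons a (Fin.cons (b + y) g) : Fin (k' + 2) → ℕ) 0 = a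
      rw [Fin.cons_zero]
    | succ i =>
      induction i using Fin.cases with
      | zero =>
        rw [← h1s, L1, Finsupp.add_apply, Finsupp.erase_same, Finsupp.single_apply,
          if_neg h21, add_zero]
      | succ t =>
        rw [Ls t, Finsupp.add_apply, Finsupp.erase_ne (show t.succ.succ ≠ (1 : Fin (k' + 2 + 1)) by
            rw [h1s]; intro hh; exact Fin.succ_ne_zero t (Fin.succ_injective _ hh)),
          Finsupp.single_apply]
        induction t using Fin.cases with
        | zero =>
          rw [if_pos h2s]
          show (Fin.cons a (Fin.cons (b + y) g) : Fin (k' + 2) → ℕ) (Fin.succ 0) =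
            (Fin.cons a (Fin.cons b (Fin.cons y g)) : Fin (k' + 2 + 1) → ℕ)
              (Fin.succ 0).succ + b
          rw [Fin.cons_succ, Fin.cons_zero, Fin.cons_succ, Fin.cons_succ, Fin.cons_zero]
          omega
        | succ r =>
          rw [if_neg (show (2 : Fin (k' + 2 + 1)) ≠ r.succ.succ.succ by
            rw [h2s]; intro hh
            exact Fin.succ_ne_zero r
              (Fin.succ_injective _ (Fin.succ_injective _ hh)).symm), add_zero]
          show (Fin.cons a (Fin.cons (b + y) g) : Fin (k' + 2) → ℕ) r.succ.succ =
            (Fin.cons a (Fin.cons b (Fin.cons y g)) : Fin (k' + 2 + 1) → ℕ) r.succ.succ.succ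
          rw [Fin.cons_succ, Fin.cons_succ, Fin.cons_succ, Fin.cons_succ, Fin.cons_succ]
  have h01 : (0 : Fin (k' + 2 + 1)) ≠ 1 := by
    rw [h1s]; exact (Fin.succ_ne_zero 0).symm
  have h12 : (1 : Fin (k' + 2 + 1)) ≠ 2 := by
    rw [h1s, h2s]; intro hh
    exact Fin.succ_ne_zero 0 (Fin.succ_injective _ hh).symm
  have hcoeff0 : coeff E (rename (Fin.succ : Fin (k' + 2) → Fin (k' + 2 + 1)) f) = 0 :=
    coeff_rename_zero _ f E 0 hrange0 (by rw [hE0]; omega)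
  have hcoeff3 : coeff E (rename r₃ f) = 0 :=
    coeff_rename_zero _ f E 2 hrange2 (by rw [hE2]; omega)
  have hsupp0 := rename_support_zero (Fin.succ : Fin (k' + 2) → Fin (k' + 2 + 1)) f 0 hrange0
  have hsupp1 := rename_support_zero r₂ f 1 hrange1
  have hcoeff1 : coeff E (aeval (fun i : Fin (k' + 2 + 1) =>
      if i = 1 then (X 0 + X 1 : MvPolynomial (Fin (k' + 2 + 1)) (ZMod p)) else X i)
      (rename Fin.succ f)) = (Nat.choose x a : ZMod p) * coeff e f := by
    rw [coeff_subst_add (0 : Fin (k' + 2 + 1)) 1 h01 _ hsupp0 E, hE0, hE1, ← hmap1,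
      coeff_rename_mapDomain _ (Fin.succ_injective _) f e, ← hab]
  have hcoeff2 : coeff E (aeval (fun i : Fin (k' + 2 + 1) =>
      if i = 2 then (X 1 + X 2 : MvPolynomial (Fin (k' + 2 + 1)) (ZMod p)) else X i)
      (rename r₂ f)) = (Nat.choose (b + y) b : ZMod p) * coeff d f := by
    rw [coeff_subst_add (1 : Fin (k' + 2 + 1)) 2 h12 _ hsupp1 E, hE1, hE2, ← hmap2,
      coeff_rename_mapDomain _ hr₂inj f d]
  have hsum : delta (ZMod p) 2 (k' + 2) f =
      rename Fin.succ f
      - aeval (fun i : Fin (k' + 2 + 1) =>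
          if i = 1 then (X 0 + X 1 : MvPolynomial (Fin (k' + 2 + 1)) (ZMod p)) else X i)
          (rename Fin.succ f)
      + aeval (fun i : Fin (k' + 2 + 1) =>
          if i = 2 then (X 1 + X 2 : MvPolynomial (Fin (k' + 2 + 1)) (ZMod p)) else X i)
          (rename r₂ f)
      - rename r₃ f := by
    unfold delta
    rw [show Finset.Icc (1 : ℕ) 2 = {1, 2} from rfl]
    rw [Finset.sum_insert (by decide), Finset.sum_singleton]
    rw [eq0 f, eq1 f, eq2 f, eq3 f, ← hr₂, ← hr₃]
    ring
  have h0 : coeff E (delta (ZMod p) 2 (k' + 2) f) = 0 := by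
    rw [hcoc]; exact coeff_zero E
  rw [hsum, coeff_sub, coeff_add, coeff_sub, hcoeff0, hcoeff1, hcoeff2, hcoeff3] at h0
  have hkey : (Nat.choose x a : ZMod p) * coeff e f
      = (Nat.choose (b + y) b : ZMod p) * coeff d f := by
    linear_combination -h0
  obtain ⟨e', he', hene⟩ := hprev
  have hexe : exMult e = x ::ₘ y ::ₘ u := by
    show multisetOf ⇑e = _
    rw [hec, multisetOf_cons, multisetOf_cons, hg]
  have hce : coeff e f ≠ 0 := by
    rw [coeff_eq_of_exMult_eq f hsym e e' (hexe.trans he'.symm)]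
    exact hene
  have hC1 : (Nat.choose x a : ZMod p) ≠ 0 := by
    rw [← hab]
    exact choose_ne_zero_zmod hp a b (by rw [hab]; exact hdig)
  have hne2 : (Nat.choose (b + y) b : ZMod p) * coeff d f ≠ 0 :=
    hkey ▸ mul_ne_zero hC1 hce
  refine ⟨d, ?_, right_ne_zero_of_mul hne2⟩
  show multisetOf ⇑d = _
  rw [hdc, multisetOf_cons, multisetOf_cons, hg]

end Step


/-- If a symmetric `2`-cocycle `f` over `ℤ/pℤ` has a nonzero
coefficient on the monomials with exponent multiset `λ`, then it has nonzero
coefficients on the monomials with exponent multiset `μ` for every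
`μ ∈ ann_p(λ)`. -/
theorem statement12 (p : ℕ) (hp : p.Prime) (k : ℕ) (hk : 2 ≤ k)
    (f : MvPolynomial (Fin k) (ZMod p)) (hsym : f.IsSymmetric)
    (hcoc : delta (ZMod p) 2 k f = 0)
    (lam : Multiset ℕ) (hpos : ∀ x ∈ lam, 0 < x) (hcard : Multiset.card lam = k)
    (hne : ∃ d : Fin k →₀ ℕ, exMult d = lam ∧ MvPolynomial.coeff d f ≠ 0)
    (μ : Multiset ℕ) (hμ : μ ∈ annSet p lam) :
    ∀ d : Fin k →₀ ℕ, exMult d = μ → MvPolynomial.coeff d f ≠ 0 := by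

  obtain ⟨k', rfl⟩ : ∃ k', k = k' + 2 := ⟨k - 2, by omega⟩
  haveI := Fact.mk hp
  have key : ∀ ν : Multiset ℕ, Relation.ReflTransGen (AnnStep p) lam ν →
      (∀ x ∈ ν, 0 < x) ∧ Multiset.card ν = k' + 2 ∧
        ∃ d : Fin (k' + 2) →₀ ℕ, exMult d = ν ∧ MvPolynomial.coeff d f ≠ 0 := by
    intro ν hν
    induction hν with
    | refl => exact ⟨hpos, hcard, hne⟩
    | tail hrt hann ih =>
      obtain ⟨hbpos, hbcard, hbex⟩ := ih
      obtain ⟨x, y, a, b, u, hbeq, ha, hb, hab, hdig, hceq⟩ := hann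
      rw [hbeq] at hbpos hbcard hbex
      have hy : 0 < y := hbpos y (by simp)
      have hcardu : Multiset.card u = k' := by simp at hbcard; omega
      have main := step_main hp f hsym hcoc x y a b u hcardu hy ha hb hab hdig hbex
      refine ⟨?_, ?_, ?_⟩
      · intro z hz
        rw [hceq, Multiset.mem_cons, Multiset.mem_cons] at hz
        rcases hz with rfl | rfl | hz
        · exact ha
        · omega
        · exact hbpos z (by simp [hz])
      · rw [hceq]; simp; omega
      · rw [hceq]; exact main
  obtain ⟨hposμ, hcardμ, d₀, hd₀, hnz⟩ := key μ hμ
  intro d hd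
  rw [coeff_eq_of_exMult_eq f hsym d d₀ (hd.trans hd₀.symm)]
  exact hnz
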